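/- Let f : [0,∞) → ℝ be m-convex with m ∈ (0,1] and 0 ≤ a < b. If f is integrable on the relevant intervals, then f((a+b)/2) ≤ (1/(b-a)) ∫_a^b (f(x) + m·f(x/m))/2 dx ≤ (1/2)[ (f(a)+m·f(a/m))/2 + m·(f(b/m)+m·f(b/m²))/2 ]. -/

import Mathlib

theorem mconvex_hermite_hadamard (f : ℝ → ℝ) (m a b : ℝ)
    (hm : m ∈ Set.Ioc (0:ℝ) 1)
    (hmc : ∀ x, 0 ≤ x → ∀ y, 0 ≤ y → ∀ t ∈ Set.Icc (0:ℝ) 1,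
      f (t * x + m * (1 - t) * y) ≤ t * f x + m * (1 - t) * f y)
    (ha : 0 ≤ a) (hab : a < b)
    (hint : IntervalIntegrable f MeasureTheory.volume a b)
    (hint' : IntervalIntegrable (fun x => f (x / m)) MeasureTheory.volume a b) :
    f ((a + b) / 2) ≤ (1 / (b - a)) * ∫ x in a..b, (f x + m * f (x / m)) / 2 ∧
      (1 / (b - a)) * ∫ x in a..b, (f x + m * f (x / m)) / 2 ≤
        (1 / 2) * ((f a + m * f (a / m)) / 2 + m * ((f (b / m) + m * f (b / m ^ 2)) / 2)) := by
  obtain ⟨hm0, hm1⟩ := hm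
  have hba : (0:ℝ) < b - a := sub_pos.mpr hab
  have hb0 : (0:ℝ) ≤ b := ha.trans hab.le
  have hg : IntervalIntegrable (fun x => (f x + m * f (x / m)) / 2)
      MeasureTheory.volume a b := (hint.add (hint'.const_mul m)).div_const 2
  constructor
  · -- left inequality
    have hrefl : IntervalIntegrable (fun x => f (a + b - x)) MeasureTheory.volume a b := by
      have := (hint.comp_sub_left (a + b)).symm
      simpa using this
    have hh : IntervalIntegrable (fun x => (f (a + b - x) + m * f (x / m)) / 2)
        MeasureTheory.volume a b := (hrefl.add (hint'.const_mul m)).div_const 2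
    have hpt : ∀ x ∈ Set.Icc a b,
        f ((a + b) / 2) ≤ (f (a + b - x) + m * f (x / m)) / 2 := by
      intro x hx
      have hx0 : 0 ≤ x := ha.trans hx.1
      have h1 : (0:ℝ) ≤ a + b - x := by nlinarith [hx.2]
      have h2 : (0:ℝ) ≤ x / m := div_nonneg hx0 hm0.le
      have key := hmc (a + b - x) h1 (x / m) h2 (1/2) (by norm_num)
      have harg : (1/2 : ℝ) * (a + b - x) + m * (1 - 1/2) * (x / m) = (a + b) / 2 := by
        field_simp
        ring
      rw [harg] at key
      calc f ((a + b) / 2) ≤ (1/2) * f (a + b - x) + m * (1 - 1/2) * f (x / m) := key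
        _ = (f (a + b - x) + m * f (x / m)) / 2 := by ring
    have hmono := intervalIntegral.integral_mono_on hab.le
      (intervalIntegrable_const (c := f ((a + b) / 2))) hh hpt
    have heq : (∫ x in a..b, (f (a + b - x) + m * f (x / m)) / 2)
        = ∫ x in a..b, (f x + m * f (x / m)) / 2 := by
      have e1 : (∫ x in a..b, f (a + b - x)) = ∫ x in a..b, f x := by
        have h := intervalIntegral.integral_comp_sub_left f (a + b) (a := a) (b := b)
        simp only [add_sub_cancel_right, add_sub_cancel_left] at h
        exact h
      have split : ∀ (F : ℝ → ℝ), IntervalIntegrable F MeasureTheory.volume a b →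
          (∫ x in a..b, (F x + m * f (x / m)) / 2)
            = (∫ x in a..b, F x) / 2 + m * (∫ x in a..b, f (x / m)) / 2 := by
        intro F hF
        rw [show (fun x => (F x + m * f (x / m)) / 2)
            = fun x => F x / 2 + (m * f (x / m)) / 2 from funext fun x => by ring]
        rw [intervalIntegral.integral_add (hF.div_const 2)
          ((hint'.const_mul m).div_const 2), intervalIntegral.integral_div,
          intervalIntegral.integral_div, intervalIntegral.integral_const_mul]
      rw [split _ hrefl, split _ hint, e1]
    rw [heq, intervalIntegral.integral_const, smul_eq_mul] at hmono
    have h2 : f ((a + b) / 2) ≤ (∫ x in a..b, (f x + m * f (x / m)) / 2) / (b - a) :=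
      (le_div_iff₀ hba).mpr (by linarith)
    calc f ((a + b) / 2) ≤ (∫ x in a..b, (f x + m * f (x / m)) / 2) / (b - a) := h2
      _ = 1 / (b - a) * ∫ x in a..b, (f x + m * f (x / m)) / 2 := by ring
  · -- right inequality
    set A : ℝ := (f a + m * f (a / m)) / 2 with hA
    set B : ℝ := m * ((f (b / m) + m * f (b / m ^ 2)) / 2) with hB
    have hℓ : IntervalIntegrable (fun x => ((b - x) * A + (x - a) * B) / (b - a))
        MeasureTheory.volume a b := by
      apply Continuous.intervalIntegrable; fun_prop
    have hpt : ∀ x ∈ Set.Icc a b,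
        (f x + m * f (x / m)) / 2 ≤ ((b - x) * A + (x - a) * B) / (b - a) := by
      intro x hx
      have ht0 : 0 ≤ (b - x) / (b - a) := div_nonneg (by linarith [hx.2]) hba.le
      have ht1 : (b - x) / (b - a) ≤ 1 := by rw [div_le_one hba]; linarith [hx.1]
      have c1 := hmc a ha (b / m) (div_nonneg hb0 hm0.le) ((b - x) / (b - a)) ⟨ht0, ht1⟩
      have c2 := hmc (a / m) (div_nonneg ha hm0.le) (b / m ^ 2)
        (div_nonneg hb0 (by positivity)) ((b - x) / (b - a)) ⟨ht0, ht1⟩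
      have e1 : (b - x) / (b - a) * a + m * (1 - (b - x) / (b - a)) * (b / m) = x := by
        field_simp
        ring
      have e2 : (b - x) / (b - a) * (a / m) + m * (1 - (b - x) / (b - a)) * (b / m ^ 2)
          = x / m := by
        field_simp
        ring
      rw [e1] at c1
      rw [e2] at c2
      have c2' := mul_le_mul_of_nonneg_left c2 hm0.le
      have erhs : ((b - x) * A + (x - a) * B) / (b - a)
          = (b - x) / (b - a) * A + (1 - (b - x) / (b - a)) * B := by
        field_simp
        ring
      rw [erhs, hA, hB]
      nlinarith [c1, c2']
    have hmono := intervalIntegral.integral_mono_on hab.le hg hℓ hpt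
    have heval : (∫ x in a..b, ((b - x) * A + (x - a) * B) / (b - a))
        = (b - a) * (A + B) / 2 := by
      rw [show (fun x => ((b - x) * A + (x - a) * B) / (b - a))
          = fun x => (b * A - a * B) / (b - a) + ((B - A) / (b - a)) * x from
        funext fun x => by field_simp; ring]
      rw [intervalIntegral.integral_add intervalIntegrable_const
        ((intervalIntegral.intervalIntegrable_id).const_mul _),
        intervalIntegral.integral_const, intervalIntegral.integral_const_mul,
        integral_id, smul_eq_mul]
      field_simp
      ring
    rw [heval] at hmono
    calc (1 / (b - a)) * ∫ x in a..b, (f x + m * f (x / m)) / 2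
        ≤ (1 / (b - a)) * ((b - a) * (A + B) / 2) :=
          mul_le_mul_of_nonneg_left hmono (by positivity)
      _ = (1/2) * (A + B) := by field_simp
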